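/- Let X ⊂ ℝ² be the closure of the set {(t, t·sin(1/t)) : t ∈ (0,1]}, i.e. X = {(t, t·sin(1/t)) : t ∈ (0,1]} ∪ {(0,0)}. Then X is a path connected compact metric space, but every continuous path γ : [0,1] → X with γ(0) = (0,0) and γ(1) = (1, sin 1) has infinite length. Consequently L(X, ξ) = ∞ for every ξ ∈ X. -/

import Mathlib

open scoped ENNReal

/-- The point `(a, b)` of the Euclidean plane. -/
noncomputable def planePt (a b : ℝ) : EuclideanSpace ℝ (Fin 2) :=
  (EuclideanSpace.equiv (Fin 2) ℝ).symm ![a, b]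

/-- The closure of `{(t, t·sin(1/t)) : t ∈ (0,1]}` in the Euclidean plane, i.e. the graph
together with the point `(0,0)`. -/
noncomputable def sineCurve : Set (EuclideanSpace ℝ (Fin 2)) :=
  {p | ∃ t ∈ Set.Ioc (0 : ℝ) 1, p = planePt t (t * Real.sin (1 / t))} ∪ {planePt 0 0}

/-- The infimum of the lengths (total variations) of continuous paths in `X` from `x` to `y`. -/
noncomputable def pathEDist {X : Type*} [PseudoEMetricSpace X] (x y : X) : ℝ≥0∞ :=
  ⨅ γ ∈ {γ : ℝ → X | ContinuousOn γ (Set.Icc 0 1) ∧ γ 0 = x ∧ γ 1 = y},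
    eVariationOn γ (Set.Icc 0 1)

@[simp] lemma planePt_apply_zero (a b : ℝ) : planePt a b 0 = a := by simp [planePt]
@[simp] lemma planePt_apply_one (a b : ℝ) : planePt a b 1 = b := by simp [planePt]

lemma planePt_cont : Continuous fun p : ℝ × ℝ => planePt p.1 p.2 := by
  unfold planePt
  refine (EuclideanSpace.equiv (Fin 2) ℝ).symm.continuous.comp (continuous_pi ?_)
  intro i
  fin_cases i
  · simpa using continuous_fst
  · simpa using continuous_snd

lemma tsin_cont : Continuous fun t : ℝ => t * Real.sin (1 / t) := by
  rw [continuous_iff_continuousAt]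
  intro x
  rcases eq_or_ne x 0 with rfl | hx
  · have h : Filter.Tendsto (fun t : ℝ => t * Real.sin (1 / t)) (nhds 0) (nhds 0) := by
      refine squeeze_zero_norm (fun t => ?_) (continuous_abs.tendsto' 0 0 abs_zero)
      calc ‖t * Real.sin (1 / t)‖ = |t| * |Real.sin (1 / t)| := abs_mul _ _
          _ ≤ |t| * 1 := by
              have := Real.abs_sin_le_one (1 / t)
              nlinarith [abs_nonneg t]
          _ = |t| := mul_one _
    unfold ContinuousAt
    convert h using 2
    simp
  · exact continuousAt_id.mul
      (Real.continuous_sin.continuousAt.comp (continuousAt_const.div continuousAt_id hx))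

lemma gcont : Continuous fun t : ℝ => planePt t (t * Real.sin (1 / t)) :=
  planePt_cont.comp (continuous_id.prodMk tsin_cont)

lemma sineCurve_eq :
    sineCurve = (fun t : ℝ => planePt t (t * Real.sin (1 / t))) '' Set.Icc 0 1 := by
  ext p
  constructor
  · rintro (⟨t, ht, rfl⟩ | hp)
    · exact ⟨t, ⟨ht.1.le, ht.2⟩, rfl⟩
    · refine ⟨0, ⟨le_rfl, zero_le_one⟩, ?_⟩
      rw [Set.mem_singleton_iff.mp hp]
      norm_num
  · rintro ⟨t, ht, rfl⟩
    rcases eq_or_lt_of_le ht.1 with rfl | htpos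
    · right; norm_num
    · exact Or.inl ⟨t, ⟨htpos, ht.2⟩, rfl⟩

lemma coord_dist_le (x y : EuclideanSpace ℝ (Fin 2)) (i : Fin 2) :
    dist (x i) (y i) ≤ dist x y := by
  rw [EuclideanSpace.dist_eq]
  have h1 : dist (x i) (y i) = Real.sqrt (dist (x i) (y i) ^ 2) := by
    rw [Real.sqrt_sq dist_nonneg]
  rw [h1]
  apply Real.sqrt_le_sqrt
  exact Finset.single_le_sum (f := fun j => dist (x j) (y j) ^ 2)
    (fun j _ => sq_nonneg _) (Finset.mem_univ i)

lemma coord_edist_le (x y : EuclideanSpace ℝ (Fin 2)) (i : Fin 2) :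
    edist (x i) (y i) ≤ edist x y := by
  rw [edist_dist, edist_dist]
  exact ENNReal.ofReal_le_ofReal (coord_dist_le x y i)

/-- The key lemma: a continuous path inside `sineCurve` whose first coordinate is `0` at some
parameter `a` and positive at some later parameter `b` has infinite variation. -/
lemma key (γ : ℝ → EuclideanSpace ℝ (Fin 2)) {A B a b : ℝ}
    (hγ : ContinuousOn γ (Set.Icc A B))
    (hmem : ∀ t ∈ Set.Icc A B, γ t ∈ sineCurve)
    (ha : a ∈ Set.Icc A B) (hb : b ∈ Set.Icc A B) (hab : a < b)
    (h0 : γ a 0 = 0) (hcpos : 0 < γ b 0) :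
    eVariationOn γ (Set.Icc A B) = ⊤ := by
  classical
  have hpi3 := Real.pi_gt_three
  have hpi4 := Real.pi_le_four
  have hpi0 := Real.pi_pos
  set tt : ℕ → ℝ := fun m => ((m : ℝ) * Real.pi + Real.pi / 2)⁻¹ with htt
  have ttpos : ∀ m, 0 < tt m := by
    intro m
    have : (0:ℝ) ≤ m := Nat.cast_nonneg m
    rw [htt]
    positivity
  have ttanti : StrictAnti tt := by
    intro i j hij
    have hi : (0:ℝ) ≤ i := Nat.cast_nonneg i
    have hij' : (i:ℝ) < j := by exact_mod_cast hij
    apply inv_strictAnti₀ (by positivity)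
    nlinarith
  have ttsin : ∀ m, Real.sin (1 / tt m) = (-1 : ℝ) ^ m := by
    intro m
    rw [htt, one_div, inv_inv, Real.sin_add_pi_div_two]
    simpa using Real.cos_nat_mul_pi_sub 0 m
  have ttlb : ∀ m : ℕ, 1 / (4 * ((m : ℝ) + 1)) ≤ tt m := by
    intro m
    have hm : (0:ℝ) ≤ m := Nat.cast_nonneg m
    have h1 : ((m:ℝ) * Real.pi + Real.pi / 2) ≤ 4 * (m + 1) := by nlinarith
    rw [htt, one_div]
    exact inv_anti₀ (by positivity) h1
  set c := γ b 0 with hc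
  set K := ⌈1 / c⌉₊ with hKdef
  have hKc : tt K < c := by
    have hK0 : (0:ℝ) ≤ K := Nat.cast_nonneg K
    have h1 : (1:ℝ) / c ≤ K := by rw [hKdef]; exact Nat.le_ceil _
    have h2 : (1:ℝ) / c < K * Real.pi + Real.pi / 2 := by nlinarith
    have hx : (0:ℝ) < K * Real.pi + Real.pi / 2 := by positivity
    rw [htt]
    rw [inv_lt_comm₀ hx hcpos]
    calc c⁻¹ = 1 / c := (one_div c).symm
      _ < _ := h2
  have sub : Set.Ioc a b ⊆ Set.Icc A B := fun x hx => ⟨ha.1.trans hx.1.le, hx.2.trans hb.2⟩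
  have hf : ContinuousOn (fun s => γ s 0) (Set.Icc A B) :=
    (EuclideanSpace.proj (0 : Fin 2)).continuous.comp_continuousOn hγ
  -- second coordinate at extremal points
  have ycoord : ∀ s ∈ Set.Icc A B, ∀ m : ℕ, γ s 0 = tt m → γ s 1 = (-1 : ℝ) ^ m * tt m := by
    intro s hs m hm
    rcases hmem s hs with ⟨t, _, hp⟩ | hp
    · have ht0 : γ s 0 = t := by rw [hp]; simp
      have ht1 : γ s 1 = t * Real.sin (1 / t) := by rw [hp]; simp
      have hteq : t = tt m := by rw [← ht0]; exact hm
      rw [ht1, hteq, ttsin m, mul_comm]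
    · exfalso
      have : γ s 0 = 0 := by rw [Set.mem_singleton_iff.mp hp]; simp
      rw [this] at hm
      exact absurd hm.symm (ne_of_gt (ttpos m))
  -- IVT step
  have step : ∀ s ∈ Set.Ioc a b, ∀ w : ℝ, 0 < w → w < γ s 0 →
      ∃ s', s' ∈ Set.Ioo a s ∧ γ s' 0 = w := by
    intro s hs w hw hws
    have hsub : Set.Icc a s ⊆ Set.Icc A B := Set.Icc_subset_Icc ha.1 (sub hs).2
    have hIVT := intermediate_value_Icc hs.1.le (hf.mono hsub)
    have hwmem : w ∈ Set.Icc (γ a 0) (γ s 0) := ⟨by rw [h0]; exact hw.le, hws.le⟩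
    obtain ⟨s', hs', hfs'⟩ := hIVT hwmem
    have hfs'' : γ s' 0 = w := hfs'
    refine ⟨s', ⟨lt_of_le_of_ne hs'.1 ?_, lt_of_le_of_ne hs'.2 ?_⟩, hfs''⟩
    · intro heq
      rw [← heq, h0] at hfs''
      exact hw.ne' hfs''.symm
    · intro heq
      rw [heq] at hfs''
      exact hws.ne' hfs''
  -- the sequence of extremal hitting times
  obtain ⟨b', hb'0, hb'succ⟩ : ∃ b' : ℕ → ℝ, b' 0 = b ∧ ∀ j, b' (j + 1) =
      if h : ∃ s', s' ∈ Set.Ioo a (b' j) ∧ γ s' 0 = tt (K + j + 1) then h.choose else a :=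
    ⟨fun n => Nat.rec b (fun j s =>
      if h : ∃ s', s' ∈ Set.Ioo a s ∧ γ s' 0 = tt (K + j + 1) then h.choose else a) n,
      rfl, fun _ => rfl⟩
  have main : ∀ j, b' j ∈ Set.Ioc a b ∧ tt (K + j) ≤ γ (b' j) 0 ∧
      (j ≠ 0 → γ (b' j) 0 = tt (K + j)) := by
    intro j
    induction j with
    | zero =>
      refine ⟨by rw [hb'0]; exact ⟨hab, le_rfl⟩, ?_, fun h => absurd rfl h⟩
      rw [hb'0]
      simpa using hKc.le
    | succ j ih =>
      have hex : ∃ s', s' ∈ Set.Ioo a (b' j) ∧ γ s' 0 = tt (K + j + 1) :=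
        step (b' j) ih.1 _ (ttpos _)
          (lt_of_lt_of_le (ttanti (by omega : K + j < K + j + 1)) ih.2.1)
      have hdef : b' (j + 1) = hex.choose := by rw [hb'succ j, dif_pos hex]
      obtain ⟨hm', hval⟩ := hex.choose_spec
      rw [hdef]
      exact ⟨⟨hm'.1, hm'.2.le.trans ih.1.2⟩, le_of_eq hval.symm, fun _ => hval⟩
  have dec : ∀ j, b' (j + 1) < b' j := by
    intro j
    have hex : ∃ s', s' ∈ Set.Ioo a (b' j) ∧ γ s' 0 = tt (K + j + 1) :=
      step (b' j) (main j).1 _ (ttpos _)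
        (lt_of_lt_of_le (ttanti (by omega : K + j < K + j + 1)) (main j).2.1)
    rw [hb'succ j, dif_pos hex]
    exact hex.choose_spec.1.2
  have banti : StrictAnti b' := strictAnti_nat_of_succ_lt dec
  set c0 : ℝ := 1 / (4 * ((K : ℝ) + 2)) with hc0
  have hc0pos : 0 < c0 := by rw [hc0]; positivity
  -- the partial-sum lower bound
  have sumle : ∀ n : ℕ,
      ENNReal.ofReal (c0 * ∑ i ∈ Finset.range n, 1 / ((i : ℝ) + 2)) ≤
        eVariationOn γ (Set.Icc A B) := by
    intro n
    set q : ℕ → ℝ := fun i => b' (n + 1 - i) with hq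
    have hqmono : Monotone q := fun i j hij => banti.antitone (Nat.sub_le_sub_left hij _)
    have hqmem : ∀ i, q i ∈ Set.Icc A B := fun i => sub (main _).1
    have base := eVariationOn.sum_le (f := γ) (n := n) hqmono hqmem
    refine le_trans ?_ base
    have termle : ∀ i ∈ Finset.range n,
        ENNReal.ofReal (c0 * (1 / (((n - 1 - i : ℕ) : ℝ) + 2))) ≤
          edist (γ (q (i + 1))) (γ (q i)) := by
      intro i hi
      rw [Finset.mem_range] at hi
      set j := n - i with hj
      have hj1 : 1 ≤ j := by omega
      have hq1 : q (i + 1) = b' j := by simp only [hq]; congr 1; omega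
      have hq2 : q i = b' (j + 1) := by simp only [hq]; congr 1; omega
      have v1 : γ (b' j) 0 = tt (K + j) := (main j).2.2 (by omega)
      have v2 : γ (b' (j + 1)) 0 = tt (K + j + 1) := by
        have := (main (j + 1)).2.2 (by omega)
        rwa [show K + (j + 1) = K + j + 1 from rfl] at this
      have y1 : γ (b' j) 1 = (-1 : ℝ) ^ (K + j) * tt (K + j) :=
        ycoord _ (sub (main j).1) _ v1
      have y2 : γ (b' (j + 1)) 1 = (-1 : ℝ) ^ (K + j + 1) * tt (K + j + 1) := by
        have := ycoord _ (sub (main (j + 1)).1) (K + j + 1) (by rw [v2])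
        exact this
      have habs : dist (γ (b' j) 1) (γ (b' (j + 1)) 1) = tt (K + j) + tt (K + j + 1) := by
        rw [Real.dist_eq, y1, y2]
        have hpow : (-1 : ℝ) ^ (K + j + 1) = -(-1 : ℝ) ^ (K + j) := by rw [pow_succ]; ring
        rw [hpow]
        have heq : (-1:ℝ) ^ (K + j) * tt (K + j) - -(-1:ℝ) ^ (K + j) * tt (K + j + 1) =
            (-1:ℝ) ^ (K + j) * (tt (K + j) + tt (K + j + 1)) := by ring
        rw [heq, abs_mul, abs_pow, abs_neg, abs_one, one_pow, one_mul,
          abs_of_nonneg (by positivity : (0:ℝ) ≤ tt (K + j) + tt (K + j + 1))]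
      have hnum : c0 * (1 / (((n - 1 - i : ℕ) : ℝ) + 2)) ≤ tt (K + j) + tt (K + j + 1) := by
        have hnat : n - 1 - i + 1 = j := by omega
        have hcast : ((n - 1 - i : ℕ) : ℝ) + 2 = (j : ℝ) + 1 := by
          rw [← hnat]; push_cast; ring
        rw [hcast]
        have h1 : c0 * (1 / ((j : ℝ) + 1)) ≤ 1 / (4 * (((K + j + 1 : ℕ) : ℝ) + 1)) := by
          rw [hc0, div_mul_div_comm, one_mul]
          apply div_le_div_of_nonneg_left one_pos.le ?_ ?_
          · positivity
          · push_cast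
            have hK0 : (0:ℝ) ≤ K := Nat.cast_nonneg K
            have hj0 : (0:ℝ) ≤ j := Nat.cast_nonneg j
            nlinarith
        calc c0 * (1 / ((j : ℝ) + 1)) ≤ 1 / (4 * (((K + j + 1 : ℕ) : ℝ) + 1)) := h1
          _ ≤ tt (K + j + 1) := ttlb _
          _ ≤ tt (K + j) + tt (K + j + 1) := le_add_of_nonneg_left (ttpos _).le
      calc ENNReal.ofReal (c0 * (1 / (((n - 1 - i : ℕ) : ℝ) + 2)))
          ≤ ENNReal.ofReal (dist (γ (b' j) 1) (γ (b' (j + 1)) 1)) := by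
            rw [habs]; exact ENNReal.ofReal_le_ofReal hnum
        _ = edist (γ (b' j) 1) (γ (b' (j + 1)) 1) := (edist_dist _ _).symm
        _ ≤ edist (γ (b' j)) (γ (b' (j + 1))) := coord_edist_le _ _ 1
        _ = edist (γ (q (i + 1))) (γ (q i)) := by rw [hq1, hq2]
    calc ENNReal.ofReal (c0 * ∑ i ∈ Finset.range n, 1 / ((i : ℝ) + 2))
        = ENNReal.ofReal (∑ i ∈ Finset.range n, c0 * (1 / ((i : ℝ) + 2))) := by
          rw [Finset.mul_sum]
      _ = ENNReal.ofReal (∑ i ∈ Finset.range n, c0 * (1 / (((n - 1 - i : ℕ) : ℝ) + 2))) := by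
          rw [Finset.sum_range_reflect (fun i => c0 * (1 / ((i : ℝ) + 2))) n]
      _ = ∑ i ∈ Finset.range n, ENNReal.ofReal (c0 * (1 / (((n - 1 - i : ℕ) : ℝ) + 2))) := by
          rw [ENNReal.ofReal_sum_of_nonneg]
          intro i _
          positivity
      _ ≤ ∑ i ∈ Finset.range n, edist (γ (q (i + 1))) (γ (q i)) :=
          Finset.sum_le_sum termle
  -- divergence
  have hsum : ∀ n : ℕ, ∑ i ∈ Finset.range n, 1 / ((i : ℝ) + 2) =
      (∑ i ∈ Finset.range (n + 1), 1 / ((i : ℝ) + 1)) - 1 := by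
    intro n
    rw [Finset.sum_range_succ' (fun i => 1 / ((i : ℝ) + 1)) n]
    have hcongr : ∀ i ∈ Finset.range n, 1 / (((i + 1 : ℕ) : ℝ) + 1) = 1 / ((i : ℝ) + 2) := by
      intro i _
      push_cast
      ring_nf
    rw [Finset.sum_congr rfl hcongr]
    norm_num
  have hdiv0 : Filter.Tendsto (fun n : ℕ => ∑ i ∈ Finset.range n, 1 / ((i : ℝ) + 2))
      Filter.atTop Filter.atTop := by
    have h1 := Real.tendsto_sum_range_one_div_nat_succ_atTop
    have h2 : Filter.Tendsto (fun n : ℕ => ∑ i ∈ Finset.range (n + 1), 1 / ((i : ℝ) + 1))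
        Filter.atTop Filter.atTop := h1.comp (Filter.tendsto_add_atTop_nat 1)
    have h3 := Filter.tendsto_atTop_add_const_right Filter.atTop (-1) h2
    simp only [← sub_eq_add_neg] at h3
    convert h3 using 1
    ext n
    exact hsum n
  have hdiv : Filter.Tendsto
      (fun n : ℕ => ENNReal.ofReal (c0 * ∑ i ∈ Finset.range n, 1 / ((i : ℝ) + 2)))
      Filter.atTop (nhds ⊤) := by
    apply ENNReal.tendsto_ofReal_atTop.comp
    exact hdiv0.const_mul_atTop hc0pos
  rw [eq_top_iff]
  exact le_of_tendsto hdiv (Filter.Eventually.of_forall sumle)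

lemma neg_image_Icc : Neg.neg '' Set.Icc (-1 : ℝ) 0 = Set.Icc 0 1 := by
  ext x
  simp only [Set.mem_image, Set.mem_Icc]
  constructor
  · rintro ⟨y, ⟨hy0, hy1⟩, rfl⟩
    constructor <;> linarith
  · rintro ⟨h0, h1⟩
    exact ⟨-x, ⟨by linarith, by linarith⟩, by ring⟩

/-- Variant of the key lemma where the zero is at the right end. -/
lemma key' (γ : ℝ → EuclideanSpace ℝ (Fin 2))
    (hγ : ContinuousOn γ (Set.Icc 0 1))
    (hmem : ∀ t ∈ Set.Icc (0:ℝ) 1, γ t ∈ sineCurve)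
    (h0 : γ 1 0 = 0) (hcpos : 0 < γ 0 0) :
    eVariationOn γ (Set.Icc 0 1) = ⊤ := by
  have hanti : AntitoneOn (Neg.neg : ℝ → ℝ) (Set.Icc (-1 : ℝ) 0) :=
    fun _ _ _ _ h => neg_le_neg h
  have hcomp := eVariationOn.comp_eq_of_antitoneOn γ Neg.neg hanti
  rw [neg_image_Icc] at hcomp
  rw [← hcomp]
  have hmaps : Set.MapsTo (Neg.neg : ℝ → ℝ) (Set.Icc (-1 : ℝ) 0) (Set.Icc 0 1) := by
    intro x hx
    rw [← neg_image_Icc]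
    exact Set.mem_image_of_mem _ hx
  refine key (γ ∘ Neg.neg) (hγ.comp continuousOn_neg hmaps)
    (fun t ht => hmem _ (hmaps ht)) (a := -1) (b := 0)
    ⟨le_rfl, by norm_num⟩ ⟨by norm_num, le_rfl⟩ (by norm_num) ?_ ?_
  · show γ (-(-1)) 0 = 0
    rw [neg_neg]
    exact h0
  · show 0 < γ (-0) 0
    rw [neg_zero]
    exact hcpos

theorem sine_curve_infinite_length :
    IsCompact sineCurve ∧ IsPathConnected sineCurve ∧
    (∀ γ : ℝ → EuclideanSpace ℝ (Fin 2), ContinuousOn γ (Set.Icc 0 1) →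
      (∀ t ∈ Set.Icc (0 : ℝ) 1, γ t ∈ sineCurve) →
      γ 0 = planePt 0 0 → γ 1 = planePt 1 (Real.sin 1) →
      eVariationOn γ (Set.Icc 0 1) = ⊤) ∧
    ∀ ξ : ↥sineCurve, (⨆ y : ↥sineCurve, pathEDist ξ y) = ⊤ := by
  refine ⟨?_, ?_, ?_, ?_⟩
  · rw [sineCurve_eq]
    exact isCompact_Icc.image gcont
  · rw [sineCurve_eq]
    refine (IsPathConnected.image ?_ gcont)
    exact (convex_Icc (0:ℝ) 1).isPathConnected ⟨0, le_rfl, zero_le_one⟩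
  · intro γ hγ hmem h0 h1
    refine key γ hγ hmem (a := 0) (b := 1)
      ⟨le_rfl, zero_le_one⟩ ⟨zero_le_one, le_rfl⟩ zero_lt_one ?_ ?_
    · rw [h0]; simp
    · rw [h1]; simp
  · intro ξ
    -- choose a suitable target point y
    rcases ξ.2 with ⟨t, ht, hp⟩ | hp
    · -- ξ is on the graph; travel to (0,0)
      set y : ↥sineCurve := ⟨planePt 0 0, Or.inr rfl⟩ with hy
      rw [eq_top_iff]
      refine le_trans ?_ (le_iSup _ y)
      rw [top_le_iff, pathEDist]
      refine iInf_eq_top.mpr fun γ => iInf_eq_top.mpr fun hγ => ?_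
      obtain ⟨hcont, hg0, hg1⟩ := hγ
      have heq : eVariationOn γ (Set.Icc 0 1) =
          eVariationOn (fun s => (γ s : EuclideanSpace ℝ (Fin 2))) (Set.Icc 0 1) := rfl
      rw [heq]
      refine key' _ (continuous_subtype_val.comp_continuousOn hcont)
        (fun s _ => (γ s).2) ?_ ?_
      · rw [hg1, hy]; simp
      · rw [hg0, hp]; simpa using ht.1
    · -- ξ = (0,0); travel to (1, sin 1)
      set y : ↥sineCurve := ⟨planePt 1 (1 * Real.sin (1 / 1)),
        Or.inl ⟨1, ⟨zero_lt_one, le_rfl⟩, rfl⟩⟩ with hy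
      rw [eq_top_iff]
      refine le_trans ?_ (le_iSup _ y)
      rw [top_le_iff, pathEDist]
      refine iInf_eq_top.mpr fun γ => iInf_eq_top.mpr fun hγ => ?_
      obtain ⟨hcont, hg0, hg1⟩ := hγ
      have heq : eVariationOn γ (Set.Icc 0 1) =
          eVariationOn (fun s => (γ s : EuclideanSpace ℝ (Fin 2))) (Set.Icc 0 1) := rfl
      rw [heq]
      refine key _ (continuous_subtype_val.comp_continuousOn hcont)
        (fun s _ => (γ s).2) (a := 0) (b := 1)
        ⟨le_rfl, zero_le_one⟩ ⟨zero_le_one, le_rfl⟩ zero_lt_one ?_ ?_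
      · rw [hg0, Set.mem_singleton_iff.mp hp]; simp
      · rw [hg1, hy]; simp
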